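/- For any countable collection of sets A_i ⊆ ℝ^d, the relative interior of the convex hull of the closure of the union of the A_i is contained in the convex hull of the union of the relative interiors of the convex hulls of the A_i: ri(conv(cl(⋃_{i=1}^∞ A_i))) ⊆ conv(⋃_{i=1}^∞ ri(conv A_i)). -/

import Mathlib

open Set Metric

variable {V : Type*} [NormedAddCommGroup V] [NormedSpace ℝ V]

/-- Metric characterization of the intrinsic interior. -/
lemma mem_intrinsicInterior_iff' {s : Set V} {x : V} :
    x ∈ intrinsicInterior ℝ s ↔
      x ∈ affineSpan ℝ s ∧ ∃ ε > 0, ∀ z ∈ affineSpan ℝ s, dist z x < ε → z ∈ s := by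
  rw [mem_intrinsicInterior]
  constructor
  · rintro ⟨y, hy, rfl⟩
    refine ⟨y.2, ?_⟩
    rw [mem_interior_iff_mem_nhds, Metric.mem_nhds_iff] at hy
    obtain ⟨ε, hε, hball⟩ := hy
    refine ⟨ε, hε, fun z hzspan hdist => ?_⟩
    exact hball (show (⟨z, hzspan⟩ : affineSpan ℝ s) ∈ ball y ε by
      simpa [Metric.mem_ball, Subtype.dist_eq] using hdist)
  · rintro ⟨hxspan, ε, hε, h⟩
    refine ⟨⟨x, hxspan⟩, ?_, rfl⟩
    rw [mem_interior_iff_mem_nhds, Metric.mem_nhds_iff]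
    exact ⟨ε, hε, fun z hz => h z z.2 (by simpa [Subtype.dist_eq] using hz)⟩

variable [FiniteDimensional ℝ V]

/-- An open combination of a point of the relative interior of a convex set with a point
of its closure lies in the relative interior. -/
lemma combo_intrinsicInterior_closure_mem {s : Set V} (hs : Convex ℝ s) {z w : V}
    (hz : z ∈ intrinsicInterior ℝ s) (hw : w ∈ closure s) {a b : ℝ}
    (ha : 0 < a) (hb : 0 < b) (hab : a + b = 1) :
    a • z + b • w ∈ intrinsicInterior ℝ s := by
  rw [mem_intrinsicInterior_iff'] at hz ⊢
  obtain ⟨hzspan, ε, hε, hball⟩ := hz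
  have hspan_closed : IsClosed ((affineSpan ℝ s : Set V)) :=
    (affineSpan ℝ s).closed_of_finiteDimensional
  have hwspan : w ∈ affineSpan ℝ s := by
    have h1 := closure_mono (subset_affineSpan ℝ s) hw
    rwa [hspan_closed.closure_eq] at h1
  have ha' : a = 1 - b := by linarith
  have hxspan : a • z + b • w ∈ affineSpan ℝ s := by
    have h2 := AffineSubspace.smul_vsub_vadd_mem (affineSpan ℝ s) b hwspan hzspan hzspan
    have : b • (w -ᵥ z) +ᵥ z = a • z + b • w := by
      rw [vsub_eq_sub, vadd_eq_add, ha']; module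
    rwa [this] at h2
  refine ⟨hxspan, a * ε / 2, by positivity, fun z' hz'span hdist => ?_⟩
  -- choose an approximation `w' ∈ s` of `w`
  obtain ⟨w', hw's, hww'⟩ := Metric.mem_closure_iff.mp hw (a * ε / (2 * b)) (by positivity)
  set u : V := a⁻¹ • (z' - (a • z + b • w) + b • (w - w')) with hu
  have hau : a • u = z' - (a • z + b • w) + b • (w - w') := smul_inv_smul₀ ha.ne' _
  have huspan : z + u ∈ affineSpan ℝ s := by
    have hd1 : z' - (a • z + b • w) ∈ (affineSpan ℝ s).direction := by
      have := AffineSubspace.vsub_mem_direction hz'span hxspan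
      rwa [vsub_eq_sub] at this
    have hd2 : w - w' ∈ (affineSpan ℝ s).direction := by
      have := AffineSubspace.vsub_mem_direction hwspan (subset_affineSpan ℝ s hw's)
      rwa [vsub_eq_sub] at this
    have hd : u ∈ (affineSpan ℝ s).direction := by
      rw [hu]
      exact Submodule.smul_mem _ _ (Submodule.add_mem _ hd1 (Submodule.smul_mem _ _ hd2))
    have := AffineSubspace.vadd_mem_of_mem_direction hd hzspan
    rwa [vadd_eq_add, add_comm] at this
  have hunorm : ‖u‖ < ε := by
    have h1 : ‖z' - (a • z + b • w)‖ < a * ε / 2 := by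
      rw [← dist_eq_norm]; exact hdist
    have h2 : ‖b • (w - w')‖ < b * (a * ε / (2 * b)) := by
      rw [norm_smul, Real.norm_eq_abs, abs_of_pos hb]
      have : ‖w - w'‖ < a * ε / (2 * b) := by rw [← dist_eq_norm]; exact hww'
      exact (mul_lt_mul_iff_right₀ hb).mpr this
    have h2' : b * (a * ε / (2 * b)) = a * ε / 2 := by field_simp
    rw [hu, norm_smul, Real.norm_eq_abs, abs_of_pos (inv_pos.mpr ha)]
    have h3 : ‖z' - (a • z + b • w) + b • (w - w')‖ < a * ε := by
      calc ‖z' - (a • z + b • w) + b • (w - w')‖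
          ≤ ‖z' - (a • z + b • w)‖ + ‖b • (w - w')‖ := norm_add_le _ _
        _ < a * ε / 2 + b * (a * ε / (2 * b)) := add_lt_add h1 h2
        _ = a * ε / 2 + a * ε / 2 := by rw [h2']
        _ = a * ε := by ring
    calc a⁻¹ * ‖z' - (a • z + b • w) + b • (w - w')‖ < a⁻¹ * (a * ε) := by
          exact (mul_lt_mul_iff_right₀ (inv_pos.mpr ha)).mpr h3
      _ = ε := by field_simp
  have hzus : z + u ∈ s := by
    refine hball (z + u) huspan ?_
    rw [dist_eq_norm]
    simpa using hunorm
  have hfinal : a • (z + u) + b • w' = z' := by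
    rw [smul_add, hau, smul_sub]; abel
  have := hs hzus hw's ha.le hb.le hab
  rwa [hfinal] at this

/-- Prolongation property: from an intrinsic interior point one can move slightly
past it away from any point of the affine span, staying in the set. -/
lemma exists_prolongation {s : Set V} {x z : V} (hx : x ∈ intrinsicInterior ℝ s)
    (hz : z ∈ affineSpan ℝ s) : ∃ t : ℝ, 0 < t ∧ x + t • (x - z) ∈ s := by
  rw [mem_intrinsicInterior_iff'] at hx
  obtain ⟨hxspan, ε, hε, hball⟩ := hx
  set t : ℝ := ε / (2 * (‖x - z‖ + 1)) with ht
  have htpos : 0 < t := by positivity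
  refine ⟨t, htpos, ?_⟩
  have hpspan : x + t • (x - z) ∈ affineSpan ℝ s := by
    have hd : t • (x - z) ∈ (affineSpan ℝ s).direction := by
      refine Submodule.smul_mem _ _ ?_
      have := AffineSubspace.vsub_mem_direction hxspan hz
      rwa [vsub_eq_sub] at this
    have := AffineSubspace.vadd_mem_of_mem_direction hd hxspan
    rwa [vadd_eq_add, add_comm] at this
  refine hball _ hpspan ?_
  rw [dist_eq_norm]
  have h1 : x + t • (x - z) - x = t • (x - z) := by abel
  rw [h1, norm_smul, Real.norm_eq_abs, abs_of_pos htpos]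
  rw [ht, div_mul_eq_mul_div, div_lt_iff₀ (by positivity)]
  nlinarith [norm_nonneg (x - z), hε]

/-- A convex set is contained in the closure of its intrinsic interior. -/
lemma subset_closure_intrinsicInterior {s : Set V} (hs : Convex ℝ s) :
    s ⊆ closure (intrinsicInterior ℝ s) := by
  intro y hy
  obtain ⟨z, hz⟩ := Set.Nonempty.intrinsicInterior hs ⟨y, hy⟩
  have hseg : openSegment ℝ z y ⊆ intrinsicInterior ℝ s := by
    rintro p ⟨a, b, ha, hb, hab, rfl⟩
    exact combo_intrinsicInterior_closure_mem hs hz (subset_closure hy) ha hb hab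
  have : y ∈ closure (openSegment ℝ z y) := by
    rw [closure_openSegment]
    exact right_mem_segment ℝ z y
  exact closure_mono hseg this

/-- For any countable collection of sets `A i ⊆ ℝ^d`,
`ri (conv (cl (⋃ i, A i))) ⊆ conv (⋃ i, ri (conv (A i)))`. -/
theorem ri_conv_cl_iUnion_subset {d : ℕ}
    (A : ℕ → Set (EuclideanSpace ℝ (Fin d))) :
    intrinsicInterior ℝ (convexHull ℝ (closure (⋃ i, A i))) ⊆
      convexHull ℝ (⋃ i, intrinsicInterior ℝ (convexHull ℝ (A i))) := by
  set E : Set (EuclideanSpace ℝ (Fin d)) :=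
    convexHull ℝ (⋃ i, intrinsicInterior ℝ (convexHull ℝ (A i))) with hE
  set D : Set (EuclideanSpace ℝ (Fin d)) := convexHull ℝ (closure (⋃ i, A i)) with hD
  intro x hx
  have hxD : x ∈ D := intrinsicInterior_subset hx
  have hEconv : Convex ℝ E := convex_convexHull ℝ _
  have hDconv : Convex ℝ D := convex_convexHull ℝ _
  -- D ⊆ closure E
  have hDE : D ⊆ closure E := by
    refine convexHull_min ?_ hEconv.closure
    refine closure_minimal ?_ isClosed_closure
    refine iUnion_subset fun i y hy => ?_
    have h1 : y ∈ convexHull ℝ (A i) := subset_convexHull ℝ _ hy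
    have h2 : y ∈ closure (intrinsicInterior ℝ (convexHull ℝ (A i))) :=
      subset_closure_intrinsicInterior (convex_convexHull ℝ _) h1
    exact closure_mono ((subset_iUnion _ i).trans (subset_convexHull ℝ _)) h2
  -- E ⊆ D
  have hED : E ⊆ D := by
    refine convexHull_min (iUnion_subset fun i => ?_) hDconv
    refine intrinsicInterior_subset.trans ?_
    exact (convexHull_mono (subset_iUnion A i)).trans (convexHull_mono subset_closure)
  have hEne : E.Nonempty := closure_nonempty_iff.mp ⟨x, hDE hxD⟩
  obtain ⟨z, hz⟩ := Set.Nonempty.intrinsicInterior hEconv hEne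
  have hzD : z ∈ D := hED (intrinsicInterior_subset hz)
  obtain ⟨t, ht, hw⟩ := exists_prolongation hx (subset_affineSpan ℝ D hzD)
  have hwE : x + t • (x - z) ∈ closure E := hDE hw
  have h1t : (0:ℝ) < 1 + t := by linarith
  have hcombo := combo_intrinsicInterior_closure_mem hEconv hz hwE
    (a := t / (1 + t)) (b := 1 / (1 + t)) (by positivity) (by positivity)
    (by field_simp; ring)
  have hid : (t / (1 + t)) • z + (1 / (1 + t)) • (x + t • (x - z)) = x := by
    have hne : (1 + t) ≠ 0 := h1t.ne'
    match_scalars <;> field_simp <;> ring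
  rw [hid] at hcombo
  exact intrinsicInterior_subset hcombo
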